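/- Let S = {w_1, ..., w_s} ⊂ ℂⁿ be a unitary 2-design. Then the n×n×n matrix multiplication tensor MM_n equals I⊗I⊗I + (n³/s³)·Σ_{i,j,k pairwise distinct} |w_i⟩⟨w_j - w_i| ⊗ |w_j⟩⟨w_k - w_j| ⊗ |w_k⟩⟨w_i - w_k|, where the sum is over all ordered triples (i,j,k) of pairwise distinct indices in {1,...,s}. -/

import Mathlib

open Matrix

/-- Outer product `|u⟩⟨v|` of complex vectors (conjugation on the bra). -/
noncomputable def outer {n : ℕ} (u v : Fin n → ℂ) : Matrix (Fin n) (Fin n) ℂ :=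
  Matrix.of fun i j => u i * (starRingEnd ℂ) (v j)

/-- Index space for an element of `(ℂ^{n×n})^{⊗3}` written in coordinates. -/
abbrev MMIdx (n : ℕ) := (Fin n × Fin n) × (Fin n × Fin n) × (Fin n × Fin n)

/-- The simple tensor `A ⊗ B ⊗ C` in coordinates. -/
def tpr {n : ℕ} (A B C : Matrix (Fin n) (Fin n) ℂ) : MMIdx n → ℂ :=
  fun x => A x.1.1 x.1.2 * B x.2.1.1 x.2.1.2 * C x.2.2.1 x.2.2.2

/-- The `n×n` matrix multiplication tensor `MM_n = Σ_{a,b,c} E_{ab}⊗E_{bc}⊗E_{ca}`. -/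
def MM (n : ℕ) : MMIdx n → ℂ :=
  fun x => if x.1.2 = x.2.1.1 ∧ x.2.1.2 = x.2.2.1 ∧ x.2.2.2 = x.1.1 then 1 else 0

private lemma trip {s : ℕ} (f g h : Fin s → ℂ) :
    ∑ i, ∑ j, ∑ k, f i * g j * h k = (∑ i, f i) * (∑ j, g j) * (∑ k, h k) := by
  simp only [← Finset.mul_sum, ← Finset.sum_mul]

/-- The expansion of one summand of the design decomposition into eight grouped monomials. -/
private def Eterm {n s : ℕ} (w : Fin s → Fin n → ℂ) (a d b e u f : Fin n)
    (i j k : Fin s) : ℂ :=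
  (w i a * (starRingEnd ℂ) (w i f)) * (w j b * (starRingEnd ℂ) (w j d)) *
      (w k u * (starRingEnd ℂ) (w k e))
  - (w i a) * (w j b * (starRingEnd ℂ) (w j d)) *
      (w k u * (starRingEnd ℂ) (w k e) * (starRingEnd ℂ) (w k f))
  - (w i a * (starRingEnd ℂ) (w i f)) *
      (w j b * (starRingEnd ℂ) (w j d) * (starRingEnd ℂ) (w j e)) * (w k u)
  + (w i a) * (w j b * (starRingEnd ℂ) (w j d) * (starRingEnd ℂ) (w j e)) *
      (w k u * (starRingEnd ℂ) (w k f))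
  - (w i a * (starRingEnd ℂ) (w i d) * (starRingEnd ℂ) (w i f)) * (w j b) *
      (w k u * (starRingEnd ℂ) (w k e))
  + (w i a * (starRingEnd ℂ) (w i d)) * (w j b) *
      (w k u * (starRingEnd ℂ) (w k e) * (starRingEnd ℂ) (w k f))
  + (w i a * (starRingEnd ℂ) (w i d) * (starRingEnd ℂ) (w i f)) *
      (w j b * (starRingEnd ℂ) (w j e)) * (w k u)
  - (w i a * (starRingEnd ℂ) (w i d)) * (w j b * (starRingEnd ℂ) (w j e)) *
      (w k u * (starRingEnd ℂ) (w k f))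

private lemma bigsum {n s : ℕ} (w : Fin s → Fin n → ℂ) (a d b e u f : Fin n) :
    ∑ i, ∑ j, ∑ k, Eterm w a d b e u f i j k =
      (∑ i, w i a * (starRingEnd ℂ) (w i f)) * (∑ j, w j b * (starRingEnd ℂ) (w j d)) *
          (∑ k, w k u * (starRingEnd ℂ) (w k e))
      - (∑ i, w i a) * (∑ j, w j b * (starRingEnd ℂ) (w j d)) *
          (∑ k, w k u * (starRingEnd ℂ) (w k e) * (starRingEnd ℂ) (w k f))
      - (∑ i, w i a * (starRingEnd ℂ) (w i f)) *
          (∑ j, w j b * (starRingEnd ℂ) (w j d) * (starRingEnd ℂ) (w j e)) * (∑ k, w k u)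
      + (∑ i, w i a) * (∑ j, w j b * (starRingEnd ℂ) (w j d) * (starRingEnd ℂ) (w j e)) *
          (∑ k, w k u * (starRingEnd ℂ) (w k f))
      - (∑ i, w i a * (starRingEnd ℂ) (w i d) * (starRingEnd ℂ) (w i f)) * (∑ j, w j b) *
          (∑ k, w k u * (starRingEnd ℂ) (w k e))
      + (∑ i, w i a * (starRingEnd ℂ) (w i d)) * (∑ j, w j b) *
          (∑ k, w k u * (starRingEnd ℂ) (w k e) * (starRingEnd ℂ) (w k f))
      + (∑ i, w i a * (starRingEnd ℂ) (w i d) * (starRingEnd ℂ) (w i f)) *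
          (∑ j, w j b * (starRingEnd ℂ) (w j e)) * (∑ k, w k u)
      - (∑ i, w i a * (starRingEnd ℂ) (w i d)) * (∑ j, w j b * (starRingEnd ℂ) (w j e)) *
          (∑ k, w k u * (starRingEnd ℂ) (w k f)) := by
  simp only [Eterm, Finset.sum_sub_distrib, Finset.sum_add_distrib, trip]

/-- If `w_1, …, w_s` is a unitary 2-design in `ℂⁿ`, then
`MM_n = I⊗I⊗I + (n³/s³) Σ_{i,j,k distinct}
|w_i⟩⟨w_j-w_i| ⊗ |w_j⟩⟨w_k-w_j| ⊗ |w_k⟩⟨w_i-w_k|`. -/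
theorem MM_eq_design_decomposition {n s : ℕ} (hn : 0 < n) (hs : 0 < s)
    (w : Fin s → Fin n → ℂ) (hinj : Function.Injective w)
    (hsum : ∑ i, w i = 0)
    (hdesign : (s : ℂ)⁻¹ • ∑ i, outer (w i) (w i) =
      (n : ℂ)⁻¹ • (1 : Matrix (Fin n) (Fin n) ℂ)) :
    MM n = tpr 1 1 1 +
      ((n : ℂ) ^ 3 / (s : ℂ) ^ 3) •
        ∑ i, ∑ j, ∑ k,
          if i ≠ j ∧ j ≠ k ∧ i ≠ k then
            tpr (outer (w i) (w j - w i)) (outer (w j) (w k - w j))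
              (outer (w k) (w i - w k))
          else 0 := by
  have hn' : (n : ℂ) ≠ 0 := Nat.cast_ne_zero.2 hn.ne'
  have hs' : (s : ℂ) ≠ 0 := Nat.cast_ne_zero.2 hs.ne'
  have z : ∀ a : Fin n, ∑ i, w i a = 0 := by
    intro a
    have := congrFun hsum a
    simpa using this
  have K : ∀ a b : Fin n, ∑ i, w i a * (starRingEnd ℂ) (w i b)
      = ((s : ℂ) / (n : ℂ)) * (if a = b then 1 else 0) := by
    intro a b
    have h1 := congrFun (congrFun hdesign a) b
    simp only [Matrix.smul_apply, Matrix.sum_apply, outer, Matrix.of_apply, Matrix.one_apply,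
      smul_eq_mul] at h1
    field_simp at h1 ⊢
    exact h1
  funext x
  obtain ⟨⟨a, d⟩, ⟨b, e⟩, ⟨u, f⟩⟩ := x
  have step1 : ∀ i j k : Fin s,
      (if i ≠ j ∧ j ≠ k ∧ i ≠ k then
          tpr (outer (w i) (w j - w i)) (outer (w j) (w k - w j)) (outer (w k) (w i - w k))
        else 0) (((a, d), (b, e), (u, f)) : MMIdx n) = Eterm w a d b e u f i j k := by
    intro i j k
    rw [apply_ite (fun F : MMIdx n → ℂ => F ((a, d), (b, e), (u, f)))]
    simp only [tpr, outer, Matrix.of_apply, Pi.zero_apply, Pi.sub_apply, map_sub, Eterm]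
    split_ifs with h
    · ring
    · rw [not_and_or, not_and_or] at h
      push_neg at h
      rcases h with h | h | h <;> subst h <;> ring
  simp only [Pi.add_apply, Pi.smul_apply, Finset.sum_apply, smul_eq_mul]
  simp only [step1]
  rw [bigsum]
  simp only [K, z]
  simp only [zero_mul, mul_zero, sub_zero, add_zero, zero_add, zero_sub, sub_neg_eq_add]
  simp only [MM, tpr, Matrix.one_apply]
  have coef : ∀ P1 P2 P3 Q1 Q2 Q3 : ℂ,
      (n : ℂ) ^ 3 / (s : ℂ) ^ 3 *
        (((s : ℂ) / n * P1) * ((s : ℂ) / n * P2) * ((s : ℂ) / n * P3) -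
          ((s : ℂ) / n * Q1) * ((s : ℂ) / n * Q2) * ((s : ℂ) / n * Q3)) =
      P1 * P2 * P3 - Q1 * Q2 * Q3 := by
    intros; field_simp
  rw [coef]
  clear step1 coef K z hdesign hsum hinj hn hs hn' hs'
  ring_nf
  split_ifs <;> simp_all
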